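/- arXiv:2511.00900 — 2 statements merged into one kernel-verified Lean document; each statement's English description precedes it below -/
import Mathlib

section
/- Let T be a positive natural number, x : ZMod T → (Fin 3 → ℝ) a tri-axial signal, R a 3×3 real orthogonal matrix, λ > 0 a real gain, t ∈ ZMod T a circular shift, and r ∈ ZMod T a frequency bin. Then the full feature map is invariant under the combined perturbation: |dft(N(m(fun n => λ • R.mulVec (x(n+t)))))(r)| = |dft(N(m(x)))(r)|, where real signals are regarded as complex-valued via coercion. -/
open scoped BigOperators
open Matrix

/-- Discrete Fourier transform of a signal `z : ZMod T → ℂ`: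
`dft z r = ∑ n, z n · exp(−2πi·r·n/T)` with canonical representatives. -/
noncomputable def dft {T : ℕ} [NeZero T] (z : ZMod T → ℂ) (r : ZMod T) : ℂ :=
  ∑ n : ZMod T,
    z n * Complex.exp (-(2 * Real.pi * Complex.I * (r.val : ℂ) * (n.val : ℂ)) / (T : ℂ))

/-- The ℓ² norm `‖z‖₂ = √(∑ n, z n²)`. -/
noncomputable def l2norm {T : ℕ} [NeZero T] (z : ZMod T → ℝ) : ℝ :=
  Real.sqrt (∑ n : ZMod T, (z n) ^ 2)

/-- Normalization `N(z) = z / ‖z‖₂` for `z ≠ 0`, and `N(0) = 0`. -/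
noncomputable def nmlz {T : ℕ} [NeZero T] (z : ZMod T → ℝ) : ZMod T → ℝ :=
  if z = 0 then 0 else fun n => z n / l2norm z

/-- Axis-to-magnitude pooling: `pool x n = √(∑ i, x n i ²)`. -/
noncomputable def pool {T : ℕ} (x : ZMod T → Fin 3 → ℝ) : ZMod T → ℝ :=
  fun n => Real.sqrt (∑ i : Fin 3, (x n i) ^ 2)

lemma dft_shift_abs {T : ℕ} [NeZero T] (y : ZMod T → ℂ) (t r : ZMod T) :
    ‖dft (fun n => y (n + t)) r‖ = ‖dft y r‖ := by
  set w : ℂ := Complex.exp (-(2 * Real.pi * Complex.I * (r.val : ℂ)) / (T : ℂ)) with hw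
  have hT : (T : ℂ) ≠ 0 := Nat.cast_ne_zero.mpr (NeZero.ne T)
  have hwpow : ∀ n : ℕ, Complex.exp
      (-(2 * Real.pi * Complex.I * (r.val : ℂ) * (n : ℂ)) / (T : ℂ)) = w ^ n := by
    intro n
    rw [hw, ← Complex.exp_nat_mul]
    congr 1
    ring
  have hwT : w ^ T = 1 := by
    rw [hw, ← Complex.exp_nat_mul]
    have : (T : ℂ) * (-(2 * Real.pi * Complex.I * (r.val : ℂ)) / (T : ℂ))
        = ((-(r.val : ℤ)) : ℂ) * (2 * Real.pi * Complex.I) := by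
      field_simp
      push_cast
      ring
    rw [this]
    convert Complex.exp_int_mul_two_pi_mul_I (-(r.val : ℤ)) using 2
    push_cast
    ring
  have haddval : ∀ a b : ZMod T, w ^ (a + b).val = w ^ a.val * w ^ b.val := by
    intro a b
    rw [ZMod.val_add, ← pow_eq_pow_mod _ hwT, pow_add]
  have habs : ‖w‖ = 1 := by
    have : -(2 * Real.pi * Complex.I * (r.val : ℂ)) / (T : ℂ)
        = ((-(2 * Real.pi * (r.val : ℝ) / (T : ℝ)) : ℝ) : ℂ) * Complex.I := by
      push_cast
      ring
    rw [hw, this, Complex.norm_exp_ofReal_mul_I]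
  have hd : ∀ z : ZMod T → ℂ, dft z r = ∑ n : ZMod T, z n * w ^ n.val := by
    intro z
    unfold dft
    exact Finset.sum_congr rfl fun n _ => by rw [hwpow]
  have key : dft (fun n => y (n + t)) r * w ^ t.val = dft y r := by
    rw [hd, hd, Finset.sum_mul]
    refine Fintype.sum_equiv (Equiv.addRight t) _ _ fun n => ?_
    simp only [Equiv.coe_addRight]
    rw [mul_assoc, ← haddval]
  calc ‖dft (fun n => y (n + t)) r‖
      = ‖dft (fun n => y (n + t)) r * w ^ t.val‖ := by
        rw [norm_mul, norm_pow, habs, one_pow, mul_one]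
    _ = ‖dft y r‖ := by rw [key]

lemma rot_norm {R : Matrix (Fin 3) (Fin 3) ℝ} (hR : Rᵀ * R = 1) (v : Fin 3 → ℝ) :
    ∑ i : Fin 3, (R.mulVec v i) ^ 2 = ∑ i : Fin 3, (v i) ^ 2 := by
  have h1 : ∑ i : Fin 3, (R.mulVec v i) ^ 2 = R.mulVec v ⬝ᵥ R.mulVec v := by
    simp [dotProduct, sq]
  have h2 : ∑ i : Fin 3, (v i) ^ 2 = v ⬝ᵥ v := by
    simp [dotProduct, sq]
  rw [h1, h2, Matrix.dotProduct_mulVec, ← Matrix.mulVec_transpose,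
    Matrix.mulVec_mulVec, hR, Matrix.one_mulVec]

/-- The full feature map (pool, normalize, DFT magnitudes) is invariant under the
combined perturbation of an orthogonal rotation, a positive gain, and a circular
time shift. -/
theorem full_feature_invariance {T : ℕ} [NeZero T] (x : ZMod T → Fin 3 → ℝ)
    (R : Matrix (Fin 3) (Fin 3) ℝ) (hR : Rᵀ * R = 1)
    {l : ℝ} (hl : 0 < l) (t r : ZMod T) :
    ‖(dft (fun n => ((nmlz (pool (fun k => l • R.mulVec (x (k + t)))) n : ℝ) : ℂ)) r)‖
    = ‖dft (fun n => ((nmlz (pool x) n : ℝ) : ℂ)) r‖ := by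
  set z : ZMod T → ℝ := pool x with hzdef
  have hpool : pool (fun k => l • R.mulVec (x (k + t))) = fun n => l * z (n + t) := by
    funext n
    unfold pool
    have : ∑ i : Fin 3, ((l • R.mulVec (x (n + t))) i) ^ 2
        = l ^ 2 * ∑ i : Fin 3, (x (n + t) i) ^ 2 := by
      rw [← rot_norm hR (x (n + t)), Finset.mul_sum]
      exact Finset.sum_congr rfl fun i _ => by
        simp [Pi.smul_apply, smul_eq_mul, mul_pow]
    rw [this, Real.sqrt_mul (sq_nonneg l), Real.sqrt_sq hl.le]
    rfl
  have hnz : nmlz (fun n => l * z (n + t)) = fun n => nmlz z (n + t) := by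
    by_cases hz0 : z = 0
    · have : (fun n : ZMod T => l * z (n + t)) = 0 := by
        funext n; simp [hz0]
      unfold nmlz
      rw [if_pos this, if_pos hz0]
      funext n
      simp
    · have h0 : (fun n : ZMod T => l * z (n + t)) ≠ 0 := by
        intro h
        apply hz0
        funext m
        have := congrFun h (m - t)
        simp only [Pi.zero_apply, sub_add_cancel] at this
        rcases mul_eq_zero.mp this with h' | h'
        · exact absurd h' hl.ne'
        · simpa using h'
      have hl2 : l2norm (fun n : ZMod T => l * z (n + t)) = l * l2norm z := by
        unfold l2norm
        have hs : ∑ n : ZMod T, (l * z (n + t)) ^ 2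
            = l ^ 2 * ∑ n : ZMod T, (z n) ^ 2 := by
          rw [Finset.mul_sum]
          rw [Fintype.sum_equiv (Equiv.addRight t)
            (fun n => (l * z (n + t)) ^ 2) (fun m => l ^ 2 * (z m) ^ 2) ?_]
          intro n
          simp only [Equiv.coe_addRight]
          ring
        rw [hs, Real.sqrt_mul (sq_nonneg l), Real.sqrt_sq hl.le]
      unfold nmlz
      rw [if_neg h0, if_neg hz0]
      funext n
      rw [hl2, mul_div_mul_left _ _ hl.ne']
  rw [hpool, hnz]
  exact dft_shift_abs (fun n => ((nmlz z n : ℝ) : ℂ)) t r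
end

section
/- Risk invariance of the concrete spectral representation: let T be a positive natural number, Y a measurable space of labels, D a measure on (ZMod T → ℝ) × Y, and μ a probability measure on ZMod T × {λ : ℝ // 0 < λ} (time shift and positive gain). Define the feature map Φ : (ZMod T → ℝ) → (ZMod T → ℝ) by Φ(z)(r) = |dft(N(z))(r)|, and the action act (t, λ) z = λ • τ_t z. Then for any g : (ZMod T → ℝ) × Y → ℝ≥0∞ such that (z,y) ↦ g(Φ(z), y) is almost-everywhere measurable with respect to D, ∫⁻_{((z,y),(t,λ))} g(Φ(act (t,λ) z), y) d(D ⊗ μ) = ∫⁻_{(z,y)} g(Φ(z), y) dD. -/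
open scoped BigOperators
open MeasureTheory

/-- Circular shift: `(shift t z) n = z (n + t)`. -/
def shift {T : ℕ} {α : Type*} (t : ZMod T) (z : ZMod T → α) : ZMod T → α :=
  fun n => z (n + t)

/-- The concrete spectral feature map `Φ(z) r = |dft (N z) r|`. -/
noncomputable def Phi {T : ℕ} [NeZero T] (z : ZMod T → ℝ) : ZMod T → ℝ :=
  fun r => ‖dft (fun n => ((nmlz z n : ℝ) : ℂ)) r‖

/-- The time-shift–and–gain action `act (t, λ) z = λ • τ_t z`. -/
noncomputable def act {T : ℕ} (p : ZMod T × {l : ℝ // 0 < l}) (z : ZMod T → ℝ) :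
    ZMod T → ℝ :=
  (p.2 : ℝ) • shift p.1 z

instance {T : ℕ} : MeasurableSpace (ZMod T) := ⊤

noncomputable def ee {T : ℕ} [NeZero T] (r : ZMod T) : ℂ :=
  Complex.exp (-(2 * Real.pi * Complex.I * (r.val : ℂ)) / (T : ℂ))

lemma ee_pow {T : ℕ} [NeZero T] (r : ZMod T) (k : ℕ) :
    (ee r) ^ k = Complex.exp (-(2 * Real.pi * Complex.I * (r.val : ℂ) * (k : ℂ)) / (T : ℂ)) := by
  rw [ee, ← Complex.exp_nat_mul]
  ring_nf

lemma ee_pow_T {T : ℕ} [NeZero T] (r : ZMod T) : (ee r) ^ T = 1 := by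
  rw [ee_pow]
  have hT : (T : ℂ) ≠ 0 := Nat.cast_ne_zero.mpr (NeZero.ne T)
  have : -(2 * Real.pi * Complex.I * (r.val : ℂ) * (T : ℂ)) / (T : ℂ)
      = ((-(r.val : ℤ) : ℤ) : ℂ) * (2 * Real.pi * Complex.I) := by
    push_cast
    field_simp
  rw [this, Complex.exp_int_mul_two_pi_mul_I]

lemma ee_pow_mod {T : ℕ} [NeZero T] (r : ZMod T) (k : ℕ) :
    (ee r) ^ (k % T) = (ee r) ^ k := by
  conv_rhs => rw [← Nat.mod_add_div k T]
  rw [pow_add, pow_mul, ee_pow_T, one_pow, mul_one]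

lemma abs_ee {T : ℕ} [NeZero T] (r : ZMod T) : ‖ee r‖ = 1 := by
  rw [ee, Complex.norm_exp]
  convert Real.exp_zero using 2
  simp [Complex.div_re, Complex.normSq]
  exact (by rw [← ZMod.natCast_val]; exact Or.inl (Complex.natCast_im _))

lemma dft_eq {T : ℕ} [NeZero T] (z : ZMod T → ℂ) (r : ZMod T) :
    dft z r = ∑ n : ZMod T, z n * (ee r) ^ n.val := by
  simp [dft, ee_pow]

lemma ee_pow_val_add {T : ℕ} [NeZero T] (r : ZMod T) (a b : ZMod T) :
    (ee r) ^ (a + b).val = (ee r) ^ a.val * (ee r) ^ b.val := by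
  rw [ZMod.val_add, ee_pow_mod, pow_add]

lemma dft_shift {T : ℕ} [NeZero T] (z : ZMod T → ℂ) (t r : ZMod T) :
    dft (shift t z) r * (ee r) ^ t.val = dft z r := by
  rw [dft_eq, dft_eq, Finset.sum_mul]
  rw [← Equiv.sum_comp (Equiv.addRight t) (fun n => z n * (ee r) ^ n.val)]
  apply Finset.sum_congr rfl
  intro n _
  simp only [Equiv.coe_addRight, shift]
  rw [ee_pow_val_add, mul_assoc]

lemma abs_dft_shift {T : ℕ} [NeZero T] (z : ZMod T → ℂ) (t r : ZMod T) :
    ‖dft (shift t z) r‖ = ‖dft z r‖ := by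
  have := congrArg (‖·‖) (dft_shift z t r)
  rwa [norm_mul, norm_pow, abs_ee, one_pow, mul_one] at this

lemma shift_eq_zero {T : ℕ} (t : ZMod T) (z : ZMod T → ℝ) :
    shift t z = 0 ↔ z = 0 := by
  constructor
  · intro h
    funext n
    have := congrFun h (n - t)
    simpa [shift] using this
  · intro h
    funext n
    simp [shift, h]

lemma l2norm_shift {T : ℕ} [NeZero T] (t : ZMod T) (z : ZMod T → ℝ) :
    l2norm (shift t z) = l2norm z := by
  unfold l2norm
  congr 1
  exact Equiv.sum_comp (Equiv.addRight t) (fun n => z n ^ 2)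

lemma l2norm_smul {T : ℕ} [NeZero T] (c : ℝ) (hc : 0 ≤ c) (z : ZMod T → ℝ) :
    l2norm (c • z) = c * l2norm z := by
  unfold l2norm
  have : ∑ n : ZMod T, (c • z) n ^ 2 = c ^ 2 * ∑ n : ZMod T, z n ^ 2 := by
    rw [Finset.mul_sum]
    apply Finset.sum_congr rfl
    intro n _
    simp [mul_pow]
  rw [this, Real.sqrt_mul (sq_nonneg c), Real.sqrt_sq hc]

lemma nmlz_act {T : ℕ} [NeZero T] (p : ZMod T × {l : ℝ // 0 < l}) (z : ZMod T → ℝ) :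
    nmlz (act p z) = shift p.1 (nmlz z) := by
  obtain ⟨t, lam⟩ := p
  by_cases hz : z = 0
  · subst hz
    have h0 : shift t (0 : ZMod T → ℝ) = 0 := (shift_eq_zero t 0).mpr rfl
    simp [act, h0, nmlz]
  · have hs : shift t z ≠ 0 := fun h => hz ((shift_eq_zero t z).mp h)
    have hlam : (lam : ℝ) ≠ 0 := ne_of_gt lam.2
    have hact : act (t, lam) z ≠ 0 := by
      simp only [act]
      exact smul_ne_zero hlam hs
    funext n
    rw [nmlz, if_neg hact]
    have : l2norm (act (t, lam) z) = (lam : ℝ) * l2norm z := by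
      show l2norm ((lam : ℝ) • shift t z) = _
      rw [l2norm_smul _ (le_of_lt lam.2), l2norm_shift]
    rw [this]
    simp only [act, Pi.smul_apply, smul_eq_mul, shift, nmlz, if_neg hz]
    show (lam : ℝ) * z (n + t) / ((lam : ℝ) * l2norm z) = z (n + t) / l2norm z
    rw [mul_div_mul_left _ _ hlam]

lemma Phi_act {T : ℕ} [NeZero T] (p : ZMod T × {l : ℝ // 0 < l}) (z : ZMod T → ℝ) :
    Phi (act p z) = Phi z := by
  funext r
  unfold Phi
  rw [nmlz_act]
  have : (fun n => ((shift p.1 (nmlz z) n : ℝ) : ℂ))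
      = shift p.1 (fun n => ((nmlz z n : ℝ) : ℂ)) := rfl
  rw [this, abs_dft_shift]

/-- Risk invariance of the concrete spectral representation: the perturbed risk
under time shifts and positive gains equals the unperturbed risk. -/
theorem risk_invariance_spectral {T : ℕ} [NeZero T] {Y : Type*} [MeasurableSpace Y]
    (D : Measure ((ZMod T → ℝ) × Y))
    (μ : Measure (ZMod T × {l : ℝ // 0 < l})) [IsProbabilityMeasure μ]
    (g : (ZMod T → ℝ) × Y → ENNReal)
    (hg : AEMeasurable (fun p : (ZMod T → ℝ) × Y => g (Phi p.1, p.2)) D) :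
    ∫⁻ q : ((ZMod T → ℝ) × Y) × (ZMod T × {l : ℝ // 0 < l}),
        g (Phi (act q.2 q.1.1), q.1.2) ∂(D.prod μ)
      = ∫⁻ p : (ZMod T → ℝ) × Y, g (Phi p.1, p.2) ∂D := by
  simp only [Phi_act]
  have hmap : (D.prod μ).map Prod.fst = D := by
    rw [Measure.map_fst_prod, measure_univ, one_smul]
  calc ∫⁻ q : ((ZMod T → ℝ) × Y) × (ZMod T × {l : ℝ // 0 < l}),
        g (Phi q.1.1, q.1.2) ∂(D.prod μ)
      = ∫⁻ p, g (Phi p.1, p.2) ∂((D.prod μ).map Prod.fst) := by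
        rw [lintegral_map' (by rw [hmap]; exact hg) measurable_fst.aemeasurable]
    _ = ∫⁻ p : (ZMod T → ℝ) × Y, g (Phi p.1, p.2) ∂D := by rw [hmap]
end
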